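/- Let β ≥ 1 and α = β + 1, let τ > 0, N ∈ ℕ with N ≥ 1, h = 1/N, and set γ := (α+β−1)/(2α) = β/α and C_p := h²/(4 sin²(πh)). Let v, v̄ ∈ ℝ^N have strictly positive entries and suppose v solves one step of the implicit Euler scheme with datum v̄, i.e. with cyclic indices, v_i − v̄_i = (ατ/h²)·v_i^{(α−1)/α}·(v_{i+1}^{β/α} − 2v_i^{β/α} + v_{i−1}^{β/α}) for all i. Define F(w) := (1/h)·Σ_{i=1}^N (w_{i+1}^γ − w_i^γ)² for positive vectors w with cyclic indices. Then F(v) − F(v̄) ≤ −τ·(2αγ/C_p)·(min_{i} v_i)^{(β−1)/α}·F(v). -/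

import Mathlib

open Finset

/-- Core quadratic-form positivity (polynomial form). -/
lemma core_poly (γ P Q X Y a b : ℝ) (hP : 0 < P) (hQ : 0 < Q) (hX : 0 < X) (hY : 0 < Y)
    (hg1 : 1/2 ≤ γ) (hg2 : γ ≤ 1) :
    0 ≤ γ*(a*P*Y - b*Q*X)^2 - (1-γ)*(P-Q)*(a^2*P*Y^2 - b^2*Q*X^2) := by
  set A : ℝ := P*Y^2*((2*γ-1)*P + (1-γ)*Q) with hA
  have hApos : 0 < A := by
    have h1 : 0 ≤ (2*γ-1) := by linarith
    have h2 : 0 ≤ (1-γ) := by linarith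
    have : 0 < (2*γ-1)*P + (1-γ)*Q := by
      rcases le_total P Q with h | h
      · nlinarith
      · nlinarith
    positivity
  have key : A * (γ*(a*P*Y - b*Q*X)^2 - (1-γ)*(P-Q)*(a^2*P*Y^2 - b^2*Q*X^2))
      = (A*a - γ*P*Q*X*Y*b)^2 + (P*Q*X^2*Y^2*(2*γ-1)*(1-γ)*(P-Q)^2)*b^2 := by
    rw [hA]; ring
  have hrhs : 0 ≤ (A*a - γ*P*Q*X*Y*b)^2 + (P*Q*X^2*Y^2*(2*γ-1)*(1-γ)*(P-Q)^2)*b^2 := by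
    have h1 : 0 ≤ (2*γ-1) := by linarith
    have h2 : 0 ≤ (1-γ) := by linarith
    positivity
  nlinarith [key, hrhs, hApos]

/-- Core positivity in rpow form. -/
lemma core_rpow (γ : ℝ) (hg1 : 1/2 ≤ γ) (hg2 : γ ≤ 1) (X Y a b : ℝ) (hX : 0 < X) (hY : 0 < Y) :
    0 ≤ γ^2*(a*X^(γ-1) - b*Y^(γ-1))^2 + γ*(γ-1)*(X^γ - Y^γ)*(a^2*X^(γ-2) - b^2*Y^(γ-2)) := by
  have hXne : X ≠ 0 := ne_of_gt hX
  have hYne : Y ≠ 0 := ne_of_gt hY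
  have hX1 : X^(γ-1) = X^γ / X := by
    rw [Real.rpow_sub hX, Real.rpow_one]
  have hY1 : Y^(γ-1) = Y^γ / Y := by
    rw [Real.rpow_sub hY, Real.rpow_one]
  have hX2 : X^(γ-2) = X^γ / X^2 := by
    rw [Real.rpow_sub hX, Real.rpow_two]
  have hY2 : Y^(γ-2) = Y^γ / Y^2 := by
    rw [Real.rpow_sub hY, Real.rpow_two]
  set P := X^γ with hPdef
  set Q := Y^γ with hQdef
  have hP : 0 < P := Real.rpow_pos_of_pos hX γ
  have hQ : 0 < Q := Real.rpow_pos_of_pos hY γ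
  have hcore := core_poly γ P Q X Y a b hP hQ hX hY hg1 hg2
  have expand : γ^2*(a*X^(γ-1) - b*Y^(γ-1))^2 + γ*(γ-1)*(X^γ - Y^γ)*(a^2*X^(γ-2) - b^2*Y^(γ-2))
      = γ/(X^2*Y^2) * (γ*(a*P*Y - b*Q*X)^2 - (1-γ)*(P-Q)*(a^2*P*Y^2 - b^2*Q*X^2)) := by
    rw [hX1, hY1, hX2, hY2]
    field_simp
    ring
  rw [expand]
  have hγ0 : 0 ≤ γ := by linarith
  positivity

open Set in
/-- Tangent-plane inequality for Φ(x,y) = (x^γ - y^γ)² on the positive quadrant. -/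
lemma edgeE (γ : ℝ) (hg1 : 1/2 ≤ γ) (hg2 : γ ≤ 1) {x y x' y' : ℝ}
    (hx : 0 < x) (hy : 0 < y) (hx' : 0 < x') (hy' : 0 < y') :
    (x^γ - y^γ)^2 + 2*(x^γ - y^γ)*(γ*x^(γ-1)*(x'-x) - γ*y^(γ-1)*(y'-y))
      ≤ (x'^γ - y'^γ)^2 := by
  set a : ℝ := x' - x with ha
  set b : ℝ := y' - y with hb
  set X : ℝ → ℝ := fun t => x + t*a with hXdef
  set Y : ℝ → ℝ := fun t => y + t*b with hYdef
  have hXpos : ∀ t ∈ Icc (0:ℝ) 1, 0 < X t := by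
    intro t ht
    rcases eq_or_lt_of_le ht.1 with h0 | h0
    · simp [hXdef, ← h0, hx]
    · have h1 : X t = (1-t)*x + t*x' := by rw [hXdef]; ring
      rw [h1]
      have : 0 ≤ (1-t)*x := mul_nonneg (by linarith [ht.2]) hx.le
      nlinarith
  have hYpos : ∀ t ∈ Icc (0:ℝ) 1, 0 < Y t := by
    intro t ht
    rcases eq_or_lt_of_le ht.1 with h0 | h0
    · simp [hYdef, ← h0, hy]
    · have h1 : Y t = (1-t)*y + t*y' := by rw [hYdef]; ring
      rw [h1]
      have : 0 ≤ (1-t)*y := mul_nonneg (by linarith [ht.2]) hy.le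
      nlinarith
  have hXd : ∀ t : ℝ, HasDerivAt X a t := by
    intro t
    have := ((hasDerivAt_id' t).mul_const a).const_add x
    simp only [one_mul] at this
    exact this
  have hYd : ∀ t : ℝ, HasDerivAt Y b t := by
    intro t
    have := ((hasDerivAt_id' t).mul_const b).const_add y
    simp only [one_mul] at this
    exact this
  -- first derivative of g(t) = (X^γ - Y^γ)²
  set D1 : ℝ → ℝ := fun t => 2*(X t^γ - Y t^γ)*(a*γ*X t^(γ-1) - b*γ*Y t^(γ-1)) with hD1def
  set g : ℝ → ℝ := fun t => (X t^γ - Y t^γ)^2 with hgdef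
  have hgd : ∀ t ∈ Icc (0:ℝ) 1, HasDerivAt g (D1 t) t := by
    intro t ht
    have hP : HasDerivAt (fun s => X s^γ) (a * γ * X t^(γ-1)) t :=
      (hXd t).rpow_const (Or.inl (ne_of_gt (hXpos t ht)))
    have hQ : HasDerivAt (fun s => Y s^γ) (b * γ * Y t^(γ-1)) t :=
      (hYd t).rpow_const (Or.inl (ne_of_gt (hYpos t ht)))
    have := ((hP.sub hQ).pow 2)
    refine this.congr_deriv ?_
    simp only [hD1def, Pi.sub_apply]
    ring
  -- second derivative
  set D2 : ℝ → ℝ := fun t => 2*((a*γ*X t^(γ-1) - b*γ*Y t^(γ-1))^2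
      + (X t^γ - Y t^γ)*(a^2*(γ*(γ-1))*X t^(γ-2) - b^2*(γ*(γ-1))*Y t^(γ-2))) with hD2def
  have hD1d : ∀ t ∈ Icc (0:ℝ) 1, HasDerivAt D1 (D2 t) t := by
    intro t ht
    have hXne := ne_of_gt (hXpos t ht)
    have hYne := ne_of_gt (hYpos t ht)
    have hP : HasDerivAt (fun s => X s^γ) (a * γ * X t^(γ-1)) t :=
      (hXd t).rpow_const (Or.inl hXne)
    have hQ : HasDerivAt (fun s => Y s^γ) (b * γ * Y t^(γ-1)) t :=
      (hYd t).rpow_const (Or.inl hYne)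
    have hP1 : HasDerivAt (fun s => X s^(γ-1)) (a * (γ-1) * X t^(γ-1-1)) t :=
      (hXd t).rpow_const (Or.inl hXne)
    have hQ1 : HasDerivAt (fun s => Y s^(γ-1)) (b * (γ-1) * Y t^(γ-1-1)) t :=
      (hYd t).rpow_const (Or.inl hYne)
    have h2 : HasDerivAt (fun s => a*γ*X s^(γ-1) - b*γ*Y s^(γ-1))
        (a*γ*(a * (γ-1) * X t^(γ-1-1)) - b*γ*(b * (γ-1) * Y t^(γ-1-1))) t :=
      ((hP1.const_mul (a*γ)).sub (hQ1.const_mul (b*γ)))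
    have h3 : HasDerivAt (fun s => X s^γ - Y s^γ) (a * γ * X t^(γ-1) - b * γ * Y t^(γ-1)) t :=
      hP.sub hQ
    have h4 : HasDerivAt (fun s => 2 * ((X s^γ - Y s^γ) * (a*γ*X s^(γ-1) - b*γ*Y s^(γ-1))))
        (2 * ((a * γ * X t^(γ-1) - b * γ * Y t^(γ-1)) * (a*γ*X t^(γ-1) - b*γ*Y t^(γ-1))
          + (X t^γ - Y t^γ) * (a*γ*(a * (γ-1) * X t^(γ-1-1)) - b*γ*(b * (γ-1) * Y t^(γ-1-1))))) t :=
      (h3.mul h2).const_mul (2:ℝ)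
    have hexp : γ - 1 - 1 = γ - 2 := by ring
    convert h4 using 1
    · ext s; simp only [hD1def]; ring
    · rw [hD2def]; simp only [hexp]; ring
  have hD2nonneg : ∀ t ∈ Icc (0:ℝ) 1, 0 ≤ D2 t := by
    intro t ht
    have := core_rpow γ hg1 hg2 (X t) (Y t) a b (hXpos t ht) (hYpos t ht)
    simp only [hD2def]
    nlinarith [this]
  -- D1 is monotone on [0,1]
  have hD1mono : MonotoneOn D1 (Icc (0:ℝ) 1) := by
    apply monotoneOn_of_deriv_nonneg (convex_Icc 0 1)
    · intro t ht
      exact (hD1d t ht).continuousAt.continuousWithinAt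
    · intro t ht
      rw [interior_Icc] at ht
      exact (hD1d t (Ioo_subset_Icc_self ht)).differentiableAt.differentiableWithinAt
    · intro t ht
      rw [interior_Icc] at ht
      rw [(hD1d t (Ioo_subset_Icc_self ht)).deriv]
      exact hD2nonneg t (Ioo_subset_Icc_self ht)
  -- φ(t) = g t - t * D1 0 is monotone on [0,1]
  set φ : ℝ → ℝ := fun t => g t - t * D1 0 with hφdef
  have hφd : ∀ t ∈ Icc (0:ℝ) 1, HasDerivAt φ (D1 t - D1 0) t := by
    intro t ht
    have := (hgd t ht).sub (((hasDerivAt_id' t).mul_const (D1 0)))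
    simp only [one_mul] at this
    exact this
  have hφmono : MonotoneOn φ (Icc (0:ℝ) 1) := by
    apply monotoneOn_of_deriv_nonneg (convex_Icc 0 1)
    · intro t ht
      exact (hφd t ht).continuousAt.continuousWithinAt
    · intro t ht
      rw [interior_Icc] at ht
      exact (hφd t (Ioo_subset_Icc_self ht)).differentiableAt.differentiableWithinAt
    · intro t ht
      rw [interior_Icc] at ht
      rw [(hφd t (Ioo_subset_Icc_self ht)).deriv]
      have := hD1mono (left_mem_Icc.mpr zero_le_one) (Ioo_subset_Icc_self ht) ht.1.le
      linarith
  have hkey := hφmono (left_mem_Icc.mpr zero_le_one) (right_mem_Icc.mpr zero_le_one) zero_le_one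
  have hX0 : X 0 = x := by simp [hXdef]
  have hY0 : Y 0 = y := by simp [hYdef]
  have hX1 : X 1 = x' := by simp [hXdef, ha]
  have hY1 : Y 1 = y' := by simp [hYdef, hb]
  rw [hφdef] at hkey
  simp only [hgdef, hD1def, hX0, hY0, hX1, hY1] at hkey
  nlinarith [hkey]

/-- Sharp discrete Poincaré–Wirtinger inequality on the cycle. -/
lemma poincare (N : ℕ) [NeZero N] (z : Fin N → ℝ) (hz : ∑ i, z i = 0) :
    4 * Real.sin (Real.pi / N)^2 * ∑ i, (z i)^2 ≤ ∑ i : Fin N, (z (i+1) - z i)^2 := by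
  have hN : N ≠ 0 := NeZero.ne N
  have hNpos : 0 < N := Nat.pos_of_ne_zero hN
  set ω : ℂ := Complex.exp (2 * ↑Real.pi * Complex.I / N) with hωdef
  have hprim : IsPrimitiveRoot ω N := Complex.isPrimitiveRoot_exp N hN
  have hωN : ω ^ N = 1 := hprim.pow_eq_one
  have hωne : ω ≠ 0 := by
    intro h
    rw [h, zero_pow hN] at hωN
    exact zero_ne_one hωN
  have hωkexp : ∀ k : ℕ, ω^k = Complex.exp ((((2*Real.pi*k/N : ℝ)):ℂ) * Complex.I) := by
    intro k
    rw [hωdef, ← Complex.exp_nat_mul]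
    congr 1
    have hNne : (N:ℂ) ≠ 0 := Nat.cast_ne_zero.mpr hN
    push_cast
    field_simp
  have habs : ‖ω‖ = 1 := by
    have h := hωkexp 1
    rw [pow_one] at h
    rw [h]
    exact Complex.norm_exp_ofReal_mul_I _
  have hnormSqω : ∀ k : ℕ, Complex.normSq (ω^k) = 1 := by
    intro k
    rw [Complex.normSq_eq_norm_sq, norm_pow, habs, one_pow, one_pow]
  have hconj : (starRingEnd ℂ) ω = ω^(N-1) := by
    have h1 : ω * (starRingEnd ℂ) ω = 1 := by
      rw [Complex.mul_conj, Complex.normSq_eq_norm_sq, habs]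
      norm_num
    have h2 : ω * ω^(N-1) = 1 := by
      rw [← pow_succ']
      have h3 : N - 1 + 1 = N := Nat.succ_pred_eq_of_pos hNpos
      rw [h3, hωN]
    exact mul_left_cancel₀ hωne (h1.trans h2.symm)
  have hpowmod : ∀ a b : ℕ, a % N = b % N → ω^a = ω^b := by
    intro a b h
    rw [pow_eq_pow_mod a hωN, pow_eq_pow_mod b hωN, h]
  set F : (Fin N → ℝ) → ℕ → ℂ := fun y k => ∑ j : Fin N, (y j : ℂ) * ω^(k * (j:ℕ)) with hFdef
  -- orthogonality
  have orth : ∀ j l : Fin N, ∑ k ∈ Finset.range N,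
      ω^(k * (j:ℕ)) * (starRingEnd ℂ) (ω^(k * (l:ℕ))) = if j = l then (N:ℂ) else 0 := by
    intro j l
    have hterm : ∀ k : ℕ, ω^(k * (j:ℕ)) * (starRingEnd ℂ) (ω^(k * (l:ℕ)))
        = (ω^((j:ℕ) + (N-1) * (l:ℕ)))^k := by
      intro k
      rw [map_pow, hconj, ← pow_mul, ← pow_mul, ← pow_add]
      congr 1
      ring
    simp only [hterm]
    by_cases hjl : j = l
    · subst hjl
      have h1 : ω^((j:ℕ) + (N-1) * (j:ℕ)) = 1 := by
        have hexp : (j:ℕ) + (N-1) * (j:ℕ) = N * (j:ℕ) := by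
          have hj : (j:ℕ) ≤ N * (j:ℕ) := Nat.le_mul_of_pos_left _ hNpos
          rw [Nat.sub_one_mul]
          omega
        rw [hexp, pow_mul, hωN, one_pow]
      simp [h1]
    · simp only [if_neg hjl]
      set ζ : ℂ := ω^((j:ℕ) + (N-1) * (l:ℕ)) with hζdef
      have hζN : ζ^N = 1 := by
        rw [hζdef, ← pow_mul, mul_comm, pow_mul, hωN, one_pow]
      have hζne : ζ ≠ 1 := by
        intro hζ1
        have hdvd : N ∣ (j:ℕ) + (N-1) * (l:ℕ) := (hprim.pow_eq_one_iff_dvd _).mp hζ1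
        have hmod : ((j:ℕ) + (N-1) * (l:ℕ)) ≡ 0 [MOD N] := (Nat.modEq_zero_iff_dvd).mpr hdvd
        have hNl : N * (l:ℕ) ≡ 0 [MOD N] := (Nat.modEq_zero_iff_dvd).mpr ⟨(l:ℕ), rfl⟩
        have hsum : (j:ℕ) + (N-1) * (l:ℕ) + (l:ℕ) = (j:ℕ) + N * (l:ℕ) := by
          have hl : (l:ℕ) ≤ N * (l:ℕ) := Nat.le_mul_of_pos_left _ hNpos
          rw [Nat.sub_one_mul]
          omega
        have h1 : (j:ℕ) + N * (l:ℕ) ≡ 0 + (l:ℕ) [MOD N] := by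
          rw [← hsum]
          exact hmod.add_right _
        have h2 : (j:ℕ) + 0 ≡ (j:ℕ) + N * (l:ℕ) [MOD N] := Nat.ModEq.add_left _ hNl.symm
        have h3 : (j:ℕ) ≡ (l:ℕ) [MOD N] := by
          simpa using h2.trans h1
        have h4 : (j:ℕ) % N = (l:ℕ) % N := h3
        rw [Nat.mod_eq_of_lt j.isLt, Nat.mod_eq_of_lt l.isLt] at h4
        exact hjl (Fin.ext h4)
      rw [geom_sum_eq hζne, hζN]
      simp
  -- Parseval, complex then real
  have parsevalC : ∀ y : Fin N → ℝ,
      ∑ k ∈ Finset.range N, (Complex.normSq (F y k) : ℂ) = (N:ℂ) * ∑ j : Fin N, ((y j : ℂ))^2 := by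
    intro y
    have step1 : ∀ k, (Complex.normSq (F y k) : ℂ)
        = ∑ j : Fin N, ∑ l : Fin N, ((y j : ℂ) * (y l : ℂ))
            * (ω^(k * (j:ℕ)) * (starRingEnd ℂ) (ω^(k * (l:ℕ)))) := by
      intro k
      rw [← Complex.mul_conj, hFdef]
      simp only [map_sum, map_mul, Complex.conj_ofReal]
      rw [Finset.sum_mul_sum]
      apply Finset.sum_congr rfl
      intro j _
      apply Finset.sum_congr rfl
      intro l _
      ring
    calc ∑ k ∈ Finset.range N, (Complex.normSq (F y k) : ℂ)
        = ∑ k ∈ Finset.range N, ∑ j : Fin N, ∑ l : Fin N,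
            ((y j : ℂ) * (y l : ℂ)) * (ω^(k * (j:ℕ)) * (starRingEnd ℂ) (ω^(k * (l:ℕ)))) :=
          Finset.sum_congr rfl (fun k _ => step1 k)
      _ = ∑ j : Fin N, ∑ l : Fin N, ((y j : ℂ) * (y l : ℂ)) *
            (∑ k ∈ Finset.range N, ω^(k * (j:ℕ)) * (starRingEnd ℂ) (ω^(k * (l:ℕ)))) := by
          rw [Finset.sum_comm]
          apply Finset.sum_congr rfl
          intro j _
          rw [Finset.sum_comm]
          apply Finset.sum_congr rfl
          intro l _
          rw [Finset.mul_sum]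
      _ = ∑ j : Fin N, ((y j : ℂ))^2 * (N:ℂ) := by
          apply Finset.sum_congr rfl
          intro j _
          simp only [orth j]
          rw [Finset.sum_eq_single j]
          · rw [if_pos rfl]; ring
          · intro l _ hne
            rw [if_neg (fun h => hne h.symm), mul_zero]
          · intro h
            exact absurd (Finset.mem_univ j) h
      _ = (N:ℂ) * ∑ j : Fin N, ((y j : ℂ))^2 := by
          rw [← Finset.sum_mul, mul_comm]
  have parseval : ∀ y : Fin N → ℝ,
      ∑ k ∈ Finset.range N, Complex.normSq (F y k) = N * ∑ j : Fin N, (y j)^2 := by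
    intro y
    exact_mod_cast parsevalC y
  -- shift identity
  have hshift : ∀ k : ℕ, ω^k * F (fun j => z (j+1)) k = F z k := by
    intro k
    rw [hFdef]
    simp only
    rw [Finset.mul_sum]
    have hterm : ∀ j : Fin N, ω^k * ((z (j+1) : ℂ) * ω^(k * (j:ℕ)))
        = (z (j+1) : ℂ) * ω^(k * ((j+1 : Fin N):ℕ)) := by
      intro j
      have hmod : (k * ((j+1 : Fin N):ℕ)) % N = (k * ((j:ℕ)+1)) % N := by
        apply Nat.ModEq.mul_left
        have : ((j+1 : Fin N):ℕ) = ((j:ℕ) + (1 % N)) % N := by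
          rw [Fin.val_add, Fin.val_one']
        rw [this]
        calc ((j:ℕ) + 1 % N) % N ≡ (j:ℕ) + 1 % N [MOD N] := Nat.mod_modEq _ N
          _ ≡ (j:ℕ) + 1 [MOD N] := Nat.ModEq.add_left _ (Nat.mod_modEq 1 N)
      rw [hpowmod _ _ hmod]
      have hka : k * ((j:ℕ)+1) = k * (j:ℕ) + k := by ring
      rw [hka, pow_add]
      ring
    rw [Finset.sum_congr rfl (fun j _ => hterm j)]
    exact Equiv.sum_comp (Equiv.addRight (1 : Fin N)) (fun i => (z i : ℂ) * ω^(k * (i:ℕ)))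
  -- F of the difference vector
  set w : Fin N → ℝ := fun j => z (j+1) - z j with hwdef
  have hFw : ∀ k : ℕ, ω^k * F w k = (1 - ω^k) * F z k := by
    intro k
    have hsub : F w k = F (fun j => z (j+1)) k - F z k := by
      rw [hFdef]
      simp only [hwdef]
      rw [← Finset.sum_sub_distrib]
      apply Finset.sum_congr rfl
      intro j _
      push_cast
      ring
    rw [hsub, mul_sub, hshift]
    ring
  have hnsq : ∀ k : ℕ, Complex.normSq (F w k) = Complex.normSq (1 - ω^k) * Complex.normSq (F z k) := by
    intro k
    have := congrArg Complex.normSq (hFw k)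
    rw [Complex.normSq_mul, Complex.normSq_mul, hnormSqω k, one_mul] at this
    exact this
  -- trigonometric identity
  have htrig : ∀ k : ℕ, Complex.normSq (1 - ω^k) = 4 * Real.sin (Real.pi * k / N)^2 := by
    intro k
    rw [hωkexp k]
    rw [Complex.normSq_apply]
    have hre : (1 - Complex.exp ((((2*Real.pi*k/N : ℝ)):ℂ) * Complex.I)).re
        = 1 - Real.cos (2*Real.pi*k/N) := by
      rw [Complex.sub_re, Complex.one_re, Complex.exp_ofReal_mul_I_re]
    have him : (1 - Complex.exp ((((2*Real.pi*k/N : ℝ)):ℂ) * Complex.I)).im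
        = - Real.sin (2*Real.pi*k/N) := by
      rw [Complex.sub_im, Complex.one_im, Complex.exp_ofReal_mul_I_im]
      ring
    rw [hre, him]
    have hs := Real.sin_sq_eq_half_sub (Real.pi * k / N)
    have hd : 2 * (Real.pi * k / N) = 2*Real.pi*k/N := by ring
    rw [hd] at hs
    have hpyth := Real.sin_sq_add_cos_sq (2*Real.pi*k/N)
    nlinarith [hs, hpyth]
  -- mean zero: F z 0 = 0
  have hFz0 : F z 0 = 0 := by
    rw [hFdef]
    simp only [zero_mul, pow_zero, mul_one]
    rw [← Complex.ofReal_sum]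
    rw [hz]
    exact Complex.ofReal_zero
  -- sin comparison
  have hsinmin : ∀ k : ℕ, 1 ≤ k → k < N → Real.sin (Real.pi/N)^2 ≤ Real.sin (Real.pi*k/N)^2 := by
    intro k hk1 hkN
    have hN2 : 2 ≤ N := by omega
    have hπ := Real.pi_pos
    have hNr : (0:ℝ) < N := by exact_mod_cast hNpos
    have hN2r : (2:ℝ) ≤ N := by exact_mod_cast hN2
    have hkr : (1:ℝ) ≤ k := by exact_mod_cast hk1
    have hkNr : (k:ℝ) ≤ (N:ℝ) - 1 := by
      have : (k:ℝ) + 1 ≤ N := by exact_mod_cast hkN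
      linarith
    have ha0 : 0 < Real.pi/N := by positivity
    have ha2 : Real.pi/N ≤ Real.pi/2 := by
      rw [div_le_div_iff₀ hNr (by norm_num : (0:ℝ) < 2)]
      nlinarith
    have hta : Real.pi/N ≤ Real.pi*k/N := by
      rw [div_le_div_iff₀ hNr hNr]
      nlinarith [mul_nonneg (mul_pos hπ hNr).le (sub_nonneg.mpr hkr)]
    have htb : Real.pi*k/N ≤ Real.pi - Real.pi/N := by
      rw [div_le_iff₀ hNr]
      have e1 : (Real.pi - Real.pi/N)*N = Real.pi*N - (Real.pi/N)*N := by ring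
      have e2 : (Real.pi/N)*N = Real.pi := by field_simp
      rw [e1, e2]
      nlinarith
    have hsin : Real.sin (Real.pi/N) ≤ Real.sin (Real.pi*k/N) := by
      rcases le_total (Real.pi*k/N) (Real.pi/2) with h | h
      · apply Real.strictMonoOn_sin.monotoneOn _ _ hta
        · exact Set.mem_Icc.mpr ⟨by linarith, by linarith⟩
        · exact Set.mem_Icc.mpr ⟨by linarith, by linarith⟩
      · rw [← Real.sin_pi_sub (Real.pi*k/N)]
        apply Real.strictMonoOn_sin.monotoneOn _ _ (by linarith : Real.pi/N ≤ Real.pi - Real.pi*k/N)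
        · exact Set.mem_Icc.mpr ⟨by linarith, by linarith⟩
        · exact Set.mem_Icc.mpr ⟨by linarith, by linarith⟩
    have h0 : 0 ≤ Real.sin (Real.pi/N) := (Real.sin_pos_of_pos_of_lt_pi ha0 (by linarith)).le
    nlinarith [hsin, h0]
  -- final chain
  have hchain : 4*Real.sin (Real.pi/N)^2 * ((N:ℝ) * ∑ j : Fin N, (z j)^2)
      ≤ (N:ℝ) * ∑ j : Fin N, (w j)^2 := by
    rw [← parseval w, ← parseval z]
    calc 4*Real.sin (Real.pi/N)^2 * ∑ k ∈ Finset.range N, Complex.normSq (F z k)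
        = ∑ k ∈ Finset.range N, 4*Real.sin (Real.pi/N)^2 * Complex.normSq (F z k) := by
          rw [Finset.mul_sum]
      _ ≤ ∑ k ∈ Finset.range N, Complex.normSq (F w k) := by
          apply Finset.sum_le_sum
          intro k hk
          rw [hnsq k, htrig k]
          rcases Nat.eq_zero_or_pos k with rfl | hk1
          · rw [hFz0]
            simp
          · have hmin := hsinmin k hk1 (Finset.mem_range.mp hk)
            have hnn : 0 ≤ Complex.normSq (F z k) := Complex.normSq_nonneg _
            nlinarith
  have hNr : (0:ℝ) < N := by exact_mod_cast hNpos
  have final : 4*Real.sin (Real.pi/N)^2 * ∑ j : Fin N, (z j)^2 ≤ ∑ j : Fin N, (w j)^2 := by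
    have h1 : (N:ℝ) * (4*Real.sin (Real.pi/N)^2 * ∑ j : Fin N, (z j)^2)
        ≤ (N:ℝ) * ∑ j : Fin N, (w j)^2 := by
      calc (N:ℝ) * (4*Real.sin (Real.pi/N)^2 * ∑ j : Fin N, (z j)^2)
          = 4*Real.sin (Real.pi/N)^2 * ((N:ℝ) * ∑ j : Fin N, (z j)^2) := by ring
        _ ≤ (N:ℝ) * ∑ j : Fin N, (w j)^2 := hchain
    exact le_of_mul_le_mul_left h1 hNr
  simpa [hwdef] using final

lemma mainchain (N : ℕ) [NeZero N] (γ c m : ℝ) (hγ1 : 1/2 ≤ γ) (hγ2 : γ ≤ 1) (hc : 0 ≤ c)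
    (hm : 0 < m) (v vbar : Fin N → ℝ) (hv : ∀ i, 0 < v i) (hvbar : ∀ i, 0 < vbar i)
    (hmle : ∀ i, m ≤ v i)
    (hs : ∀ i : Fin N, vbar i - v i = -(c * v i ^ γ * (v (i+1) ^ γ - 2 * v i ^ γ + v (i-1) ^ γ))) :
    ∑ i : Fin N, (v (i+1) ^ γ - v i ^ γ)^2
      + 2*c*γ * (m ^ (2*γ-1) * (4 * Real.sin (Real.pi / N)^2
          * ∑ i : Fin N, (v (i+1) ^ γ - v i ^ γ)^2))
      ≤ ∑ i : Fin N, (vbar (i+1) ^ γ - vbar i ^ γ)^2 := by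
  have shift1 : ∀ f : Fin N → ℝ, ∑ i : Fin N, f (i+1) = ∑ i : Fin N, f i := by
    intro f
    exact Equiv.sum_comp (Equiv.addRight (1 : Fin N)) f
  set u : Fin N → ℝ := fun i => v i ^ γ with hu
  set Lu : Fin N → ℝ := fun i => u (i+1) - 2 * u i + u (i-1) with hLu
  set q : Fin N → ℝ := fun j => γ * v j ^ (γ-1) * (vbar j - v j) with hq
  -- summation by parts
  have shift2 : ∑ j : Fin N, q j * u (j-1) = ∑ i : Fin N, q (i+1) * u i := by
    rw [← Equiv.sum_comp (Equiv.addRight (1 : Fin N)) (fun j => q j * u (j-1))]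
    apply Finset.sum_congr rfl
    intro i _
    simp only [Equiv.coe_addRight, add_sub_cancel_right]
  have telescope : ∑ i : Fin N, (u (i+1) * q (i+1) - u i * q i) = 0 := by
    rw [Finset.sum_sub_distrib, shift1 (fun i => u i * q i), sub_self]
  have key : ∑ i : Fin N, (u (i+1) - u i) * (q (i+1) - q i) = - ∑ j : Fin N, q j * Lu j := by
    have t1 : ∑ i : Fin N, (u (i+1) - u i) * (q (i+1) - q i)
        = ∑ i : Fin N, (u (i+1) * q (i+1) - u i * q i)
          - ∑ i : Fin N, (q i * (u (i+1) - 2 * u i) + q (i+1) * u i) := by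
      rw [← Finset.sum_sub_distrib]
      apply Finset.sum_congr rfl
      intro i _
      ring
    have t2 : ∑ i : Fin N, (q i * (u (i+1) - 2 * u i) + q (i+1) * u i)
        = ∑ j : Fin N, q j * Lu j := by
      rw [Finset.sum_add_distrib, ← shift2, ← Finset.sum_add_distrib]
      apply Finset.sum_congr rfl
      intro j _
      simp only [hLu]
      ring
    rw [t1, t2, telescope, zero_sub]
  -- the vertex weight identity
  have hqLu : ∀ j : Fin N, q j * Lu j = -(c * γ * (v j ^ (2*γ-1) * (Lu j)^2)) := by
    intro j
    have hpow : v j ^ (γ-1) * v j ^ γ = v j ^ (2*γ-1) := by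
      rw [← Real.rpow_add (hv j)]
      congr 1
      ring
    have hsj := hs j
    simp only [hq]
    rw [hsj]
    simp only [hLu, hu]
    linear_combination (-(c*γ*(v (j+1) ^ γ - 2 * v j ^ γ + v (j-1) ^ γ)^2)) * hpow
  -- cross term
  have cross_eq : ∑ i : Fin N, 2*((u (i+1) - u i) * (q (i+1) - q i))
      = 2*c*γ * ∑ j : Fin N, v j ^ (2*γ-1) * (Lu j)^2 := by
    calc ∑ i : Fin N, 2*((u (i+1) - u i) * (q (i+1) - q i))
        = 2 * ∑ i : Fin N, (u (i+1) - u i) * (q (i+1) - q i) := by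
          rw [Finset.mul_sum]
      _ = 2 * (- ∑ j : Fin N, q j * Lu j) := by rw [key]
      _ = 2 * ∑ j : Fin N, c*γ*(v j ^ (2*γ-1) * (Lu j)^2) := by
          congr 1
          rw [← Finset.sum_neg_distrib]
          apply Finset.sum_congr rfl
          intro j _
          rw [hqLu j]
          ring
      _ = 2*c*γ * ∑ j : Fin N, v j ^ (2*γ-1) * (Lu j)^2 := by
          rw [Finset.mul_sum, Finset.mul_sum]
          apply Finset.sum_congr rfl
          intro j _
          ring
  -- Step A : per-edge convexity
  have stepA : ∑ i : Fin N, (u (i+1) - u i)^2 + 2*c*γ * ∑ j : Fin N, v j ^ (2*γ-1) * (Lu j)^2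
      ≤ ∑ i : Fin N, (vbar (i+1) ^ γ - vbar i ^ γ)^2 := by
    have edge : ∀ i : Fin N, (u (i+1) - u i)^2 + 2*((u (i+1) - u i) * (q (i+1) - q i))
        ≤ (vbar (i+1) ^ γ - vbar i ^ γ)^2 := by
      intro i
      have h := edgeE γ hγ1 hγ2 (hv (i+1)) (hv i) (hvbar (i+1)) (hvbar i)
      simp only [hu, hq]
      calc (v (i+1) ^ γ - v i ^ γ)^2
            + 2*((v (i+1) ^ γ - v i ^ γ) * (γ * v (i+1) ^ (γ-1) * (vbar (i+1) - v (i+1))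
              - γ * v i ^ (γ-1) * (vbar i - v i)))
          = (v (i+1) ^ γ - v i ^ γ)^2
            + 2*(v (i+1) ^ γ - v i ^ γ) * (γ * v (i+1) ^ (γ-1) * (vbar (i+1) - v (i+1))
              - γ * v i ^ (γ-1) * (vbar i - v i)) := by ring
        _ ≤ (vbar (i+1) ^ γ - vbar i ^ γ)^2 := h
    calc ∑ i : Fin N, (u (i+1) - u i)^2 + 2*c*γ * ∑ j : Fin N, v j ^ (2*γ-1) * (Lu j)^2
        = ∑ i : Fin N, ((u (i+1) - u i)^2 + 2*((u (i+1) - u i) * (q (i+1) - q i))) := by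
          rw [Finset.sum_add_distrib, ← cross_eq]
      _ ≤ ∑ i : Fin N, (vbar (i+1) ^ γ - vbar i ^ γ)^2 := Finset.sum_le_sum (fun i _ => edge i)
  -- Step B : minimum bound
  have stepB : m^(2*γ-1) * ∑ j : Fin N, (Lu j)^2 ≤ ∑ j : Fin N, v j ^ (2*γ-1) * (Lu j)^2 := by
    rw [Finset.mul_sum]
    apply Finset.sum_le_sum
    intro j _
    apply mul_le_mul_of_nonneg_right _ (sq_nonneg _)
    exact Real.rpow_le_rpow hm.le (hmle j) (by linarith)
  -- Step C : Poincaré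
  have hzsum : ∑ i : Fin N, (u (i+1) - u i) = 0 := by
    rw [Finset.sum_sub_distrib, shift1 u, sub_self]
  have hP := poincare N (fun i => u (i+1) - u i) hzsum
  have hident : ∑ i : Fin N, ((u (i+1+1) - u (i+1)) - (u (i+1) - u i))^2
      = ∑ j : Fin N, (Lu j)^2 := by
    have e1 : ∀ i : Fin N, (u (i+1+1) - u (i+1)) - (u (i+1) - u i) = Lu (i+1) := by
      intro i
      simp only [hLu]
      rw [add_sub_cancel_right]
      ring
    rw [Finset.sum_congr rfl (fun i _ => by rw [e1 i])]
    exact shift1 (fun j => (Lu j)^2)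
  have stepC : 4*Real.sin (Real.pi/N)^2 * ∑ i : Fin N, (u (i+1) - u i)^2
      ≤ ∑ j : Fin N, (Lu j)^2 := by
    rw [← hident]
    exact hP
  -- combine
  have hγ0 : (0:ℝ) ≤ γ := by linarith
  have hm' : (0:ℝ) ≤ m^(2*γ-1) := (Real.rpow_pos_of_pos hm _).le
  have chain : 2*c*γ*(m^(2*γ-1) * (4*Real.sin (Real.pi/N)^2 * ∑ i : Fin N, (u (i+1) - u i)^2))
      ≤ 2*c*γ * ∑ j : Fin N, v j ^ (2*γ-1) * (Lu j)^2 := by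
    apply mul_le_mul_of_nonneg_left _ (by positivity : (0:ℝ) ≤ 2*c*γ)
    calc m^(2*γ-1) * (4*Real.sin (Real.pi/N)^2 * ∑ i : Fin N, (u (i+1) - u i)^2)
        ≤ m^(2*γ-1) * ∑ j : Fin N, (Lu j)^2 := mul_le_mul_of_nonneg_left stepC hm'
      _ ≤ ∑ j : Fin N, v j ^ (2*γ-1) * (Lu j)^2 := stepB
  have := add_le_add_left chain (∑ i : Fin N, (u (i+1) - u i)^2)
  linarith [stepA, this]

/-- Assumption A2 of the discrete Bakry–Emery method on the line α − β = 1: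
exponential decay of the discrete Fisher information in one time step. -/
theorem fisher_decay_one_step
    (β : ℝ) (hβ : 1 ≤ β) (α : ℝ) (hαβ : α = β + 1)
    (τ : ℝ) (hτ : 0 < τ)
    (N : ℕ) [NeZero N] (h : ℝ) (hh : h = 1 / N)
    (γ Cp : ℝ) (hγ : γ = (α + β - 1) / (2 * α))
    (hCp : Cp = h ^ 2 / (4 * Real.sin (Real.pi * h) ^ 2))
    (v vbar : Fin N → ℝ) (hv : ∀ i, 0 < v i) (hvbar : ∀ i, 0 < vbar i)
    (hscheme : ∀ i : Fin N,
      v i - vbar i = α * τ / h ^ 2 * v i ^ ((α - 1) / α) *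
        (v (i + 1) ^ (β / α) - 2 * v i ^ (β / α) + v (i - 1) ^ (β / α)))
    (F : (Fin N → ℝ) → ℝ)
    (hF : ∀ w : Fin N → ℝ, F w = 1 / h * ∑ i : Fin N, (w (i + 1) ^ γ - w i ^ γ) ^ 2) :
    F v - F vbar ≤ -(τ * (2 * α * γ / Cp) * (⨅ i, v i) ^ ((β - 1) / α)) * F v := by
  have hα : (0:ℝ) < α := by rw [hαβ]; linarith
  have hNr : (0:ℝ) < N := by
    have := Nat.pos_of_ne_zero (NeZero.ne N)
    exact_mod_cast this
  have hh0 : 0 < h := by rw [hh]; positivity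
  -- γ value
  have hγβ : γ = β / α := by
    rw [hγ, hαβ]
    field_simp
    ring
  have hγ1 : 1/2 ≤ γ := by
    rw [hγβ, hαβ, le_div_iff₀ (by linarith : (0:ℝ) < β + 1)]
    linarith
  have hγ2 : γ ≤ 1 := by
    rw [hγβ, hαβ, div_le_one (by linarith : (0:ℝ) < β + 1)]
    linarith
  -- exponent identities
  have hexp1 : (α - 1) / α = γ := by rw [hγβ, hαβ]; norm_num
  have hexp2 : β / α = γ := hγβ.symm
  have hexp3 : (β - 1) / α = 2*γ - 1 := by
    rw [hγβ, hαβ]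
    field_simp
    ring
  -- minimum
  set m : ℝ := ⨅ i, v i with hm
  obtain ⟨i₀, hi₀⟩ := Finite.exists_min v
  have hmle : ∀ i, m ≤ v i := fun i =>
    ciInf_le (Set.Finite.bddBelow (Set.finite_range v)) i
  have hm0 : 0 < m := lt_of_lt_of_le (hv i₀) (le_ciInf hi₀)
  -- scheme in normalized form
  set c : ℝ := α * τ / h^2 with hc
  have hc0 : 0 ≤ c := by positivity
  have hs : ∀ i : Fin N, vbar i - v i
      = -(c * v i ^ γ * (v (i+1) ^ γ - 2 * v i ^ γ + v (i-1) ^ γ)) := by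
    intro i
    have := hscheme i
    rw [hexp1, hexp2] at this
    linarith [this]
  -- main chain
  have main := mainchain N γ c m hγ1 hγ2 hc0 hm0 v vbar hv hvbar hmle hs
  -- identify the decay constant
  set S : ℝ := ∑ i : Fin N, (v (i+1) ^ γ - v i ^ γ)^2 with hS
  set Sb : ℝ := ∑ i : Fin N, (vbar (i+1) ^ γ - vbar i ^ γ)^2 with hSb
  have hπh : Real.pi * h = Real.pi / N := by rw [hh]; ring
  have hKeq : τ * (2 * α * γ / Cp) * m ^ ((β - 1) / α)
      = 2*c*γ*(m ^ (2*γ-1) * (4 * Real.sin (Real.pi / N)^2)) := by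
    rw [hexp3, hCp, hπh]
    by_cases hsin : Real.sin (Real.pi / N) = 0
    · rw [hsin]
      norm_num
    · have h4 : 4 * Real.sin (Real.pi / N)^2 ≠ 0 := by positivity
      rw [hc]
      field_simp
  have hFv : F v = 1/h * S := hF v
  have hFvb : F vbar = 1/h * Sb := hF vbar
  have hstep : S - Sb ≤ -(2*c*γ*(m ^ (2*γ-1) * (4 * Real.sin (Real.pi / N)^2))) * S := by
    have : S + 2*c*γ * (m ^ (2*γ-1) * (4 * Real.sin (Real.pi / N)^2 * S)) ≤ Sb := main
    nlinarith [this]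
  rw [hFv, hFvb, hKeq]
  have h1h : 0 ≤ 1/h := by positivity
  calc 1/h * S - 1/h * Sb = 1/h * (S - Sb) := by ring
    _ ≤ 1/h * (-(2*c*γ*(m ^ (2*γ-1) * (4 * Real.sin (Real.pi / N)^2))) * S) := by
        apply mul_le_mul_of_nonneg_left _ h1h
        exact hstep
    _ = -(2*c*γ*(m ^ (2*γ-1) * (4 * Real.sin (Real.pi / N)^2))) * (1/h * S) := by ring
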